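/- Let X, Y be real Hilbert spaces, T : X → Y a bounded linear operator, f† ∈ X, n ≥ 1 and m ≥ n integers, and Φ a concave index function such that VSC^{2n−1}(f†, Φ) holds. Then there exists a constant C > 0, depending only on n and m, such that for all α > 0 and δ > 0, every g ∈ Y with ‖g − T f†‖ ≤ δ, every Bregman-iterated Tikhonov sequence (f_k) for the data (g, α), and every ψ ∈ ℝ satisfying −t/α + Φ(t) ≤ ψ for all t ≥ 0, one has ‖f_m − f†‖² ≤ C (δ²/α + α^{2n−2} ψ). -/

import Mathlib

open scoped RealInnerProductSpace

open ContinuousLinearMap in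
private lemma aux_normal_eq {X : Type*} [NormedAddCommGroup X] [InnerProductSpace ℝ X]
    [CompleteSpace X]
    {Y : Type*} [NormedAddCommGroup Y] [InnerProductSpace ℝ Y] [CompleteSpace Y]
    (T : X →L[ℝ] Y) (α : ℝ) (hα : 0 < α) (g : Y) (p fk : X)
    (hmin : ∀ h : X, ‖T fk - g‖ ^ 2 + α * ‖fk - p‖ ^ 2 ≤ ‖T h - g‖ ^ 2 + α * ‖h - p‖ ^ 2) :
    ContinuousLinearMap.adjoint T (T fk - g) + α • (fk - p) = 0 := by
  set w : X := ContinuousLinearMap.adjoint T (T fk - g) + α • (fk - p) with hw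
  have hinner : ⟪T fk - g, T w⟫ + α * ⟪fk - p, w⟫ = ‖w‖ ^ 2 := by
    rw [← ContinuousLinearMap.adjoint_inner_left T, ← real_inner_smul_left, ← inner_add_left,
      ← hw, real_inner_self_eq_norm_sq]
  have hkey : ∀ t : ℝ, 2 * t * ‖w‖ ^ 2 ≤ t ^ 2 * (‖T w‖ ^ 2 + α * ‖w‖ ^ 2) := by
    intro t
    have h := hmin (fk - t • w)
    have e1 : T (fk - t • w) - g = (T fk - g) - t • T w := by
      simp [map_sub, map_smul]; abel
    have e2 : (fk - t • w) - p = (fk - p) - t • w := by abel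
    rw [e1, e2] at h
    have n1 : ‖(T fk - g) - t • T w‖ ^ 2
        = ‖T fk - g‖ ^ 2 - 2 * (t * ⟪T fk - g, T w⟫) + t ^ 2 * ‖T w‖ ^ 2 := by
      rw [norm_sub_sq_real, real_inner_smul_right, norm_smul]
      simp [mul_pow, abs_mul_abs_self]
    have n2 : ‖(fk - p) - t • w‖ ^ 2
        = ‖fk - p‖ ^ 2 - 2 * (t * ⟪fk - p, w⟫) + t ^ 2 * ‖w‖ ^ 2 := by
      rw [norm_sub_sq_real, real_inner_smul_right, norm_smul]
      simp [mul_pow, abs_mul_abs_self]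
    rw [n1, n2] at h
    rw [show (2:ℝ) * t * ‖w‖ ^ 2 = 2 * t * (⟪T fk - g, T w⟫ + α * ⟪fk - p, w⟫) by
      rw [hinner]]
    ring_nf
    ring_nf at h
    linarith
  by_contra hne
  have hs : 0 < ‖w‖ ^ 2 := pow_pos (norm_pos_iff.mpr hne) 2
  set c : ℝ := ‖T w‖ ^ 2 + α * ‖w‖ ^ 2 with hc
  have hcpos : 0 < c := by positivity
  have h2 := hkey (‖w‖ ^ 2 / c)
  have h3 : 2 * (‖w‖ ^ 2 / c) * ‖w‖ ^ 2 = 2 * (‖w‖ ^ 2) ^ 2 / c := by ring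
  have h4 : (‖w‖ ^ 2 / c) ^ 2 * c = (‖w‖ ^ 2) ^ 2 / c := by field_simp
  rw [h3, h4, div_le_div_iff₀ hcpos hcpos] at h2
  nlinarith [mul_pos (pow_pos hs 2) hcpos]

open ContinuousLinearMap in
private lemma aux_inverse {X : Type*} [NormedAddCommGroup X] [InnerProductSpace ℝ X]
    [CompleteSpace X]
    {Y : Type*} [NormedAddCommGroup Y] [InnerProductSpace ℝ Y] [CompleteSpace Y]
    (T : X →L[ℝ] Y) (α : ℝ) (hα : 0 < α) :
    ∃ R : X →L[ℝ] X,
      (∀ x, (ContinuousLinearMap.adjoint T) (T (R x)) + α • R x = x) ∧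
      (∀ x, R ((ContinuousLinearMap.adjoint T) (T x) + α • x) = x) := by
  set A : X →L[ℝ] X := ContinuousLinearMap.adjoint T ∘L T with hA
  set S : X →L[ℝ] X := A + α • ContinuousLinearMap.id ℝ X with hS
  have hSapp : ∀ x : X, S x = A x + α • x := by intro x; simp [hS]
  have hAinner : ∀ u : X, ⟪A u, u⟫ = ‖T u‖ ^ 2 := by
    intro u
    simp [hA, ContinuousLinearMap.adjoint_inner_left, real_inner_self_eq_norm_sq]
  have hco : IsCoercive ((innerSL ℝ).comp S) := by
    refine ⟨α, hα, fun u => ?_⟩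
    simp only [ContinuousLinearMap.comp_apply, innerSL_apply_apply]
    rw [hSapp, inner_add_left, real_inner_smul_left, hAinner, real_inner_self_eq_norm_sq]
    nlinarith [sq_nonneg ‖T u‖, norm_nonneg u]
  set e := hco.continuousLinearEquivOfBilin with he
  have heS : ∀ v : X, e v = S v := by
    intro v
    have h1 : ∀ w, ⟪e v, w⟫ = ⟪S v, w⟫ := by
      intro w
      rw [hco.continuousLinearEquivOfBilin_apply]
      simp
    have : ∀ w, ⟪w, e v⟫ = ⟪w, S v⟫ := fun w => by
      rw [real_inner_comm, h1, real_inner_comm]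
    exact ext_inner_left ℝ this
  refine ⟨e.symm.toContinuousLinearMap, fun x => ?_, fun x => ?_⟩
  · have := heS (e.symm x)
    simp only [ContinuousLinearEquiv.apply_symm_apply] at this
    simpa [hS, hA] using this.symm
  · have : e.symm (e x) = x := e.symm_apply_apply x
    rw [heS x] at this
    simpa [hS, hA] using this

set_option maxHeartbeats 2000000 in
/-- Convergence rates for Bregman iterated Tikhonov regularization in
Hilbert spaces under the odd-order variational source condition `VSC^{2n−1}(f†, Φ)`:
there is `C > 0` depending only on `n` and `m ≥ n` such that
`‖f_m − f†‖² ≤ C (δ²/α + α^{2n−2} ψ)` whenever `ψ` dominates `sup_{t≥0} (−t/α + Φ(t))`. -/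
theorem stmt_2 (n m : ℕ) (hn : 1 ≤ n) (hnm : n ≤ m) :
    ∃ C : ℝ, 0 < C ∧
      ∀ (X Y : Type*) [NormedAddCommGroup X] [InnerProductSpace ℝ X] [CompleteSpace X]
        [NormedAddCommGroup Y] [InnerProductSpace ℝ Y] [CompleteSpace Y],
        ∀ (T : X →L[ℝ] Y) (fdag : X) (Φ : ℝ → ℝ),
        -- Φ is a concave index function
        ContinuousOn Φ (Set.Ici 0) → MonotoneOn Φ (Set.Ici 0) → Φ 0 = 0 →
        (∀ t : ℝ, 0 ≤ t → 0 ≤ Φ t) → ConcaveOn ℝ (Set.Ici 0) Φ →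
        -- VSC^{2n−1}(f†, Φ)
        (∃ ω : X,
          fdag = ((ContinuousLinearMap.adjoint T ∘L T) ^ (n - 1)) ω ∧
          ∀ f : X, ⟪ω, f⟫ ≤ 1 / 2 * ‖f‖ ^ 2 + Φ (‖T f‖ ^ 2)) →
        ∀ α δ : ℝ, 0 < α → 0 < δ →
          ∀ g : Y, ‖g - T fdag‖ ≤ δ →
            -- Bregman iterated Tikhonov sequence for the data (g, α)
            ∀ f : ℕ → X, f 0 = 0 →
              (∀ k : ℕ, 1 ≤ k → ∀ h : X,
                ‖T (f k) - g‖ ^ 2 + α * ‖f k - f (k - 1)‖ ^ 2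
                  ≤ ‖T h - g‖ ^ 2 + α * ‖h - f (k - 1)‖ ^ 2) →
              ∀ ψ : ℝ, (∀ t : ℝ, 0 ≤ t → -t / α + Φ t ≤ ψ) →
                ‖f m - fdag‖ ^ 2 ≤ C * (δ ^ 2 / α + α ^ (2 * n - 2) * ψ) := by
  obtain ⟨q, rfl⟩ : ∃ q, n = q + 1 := ⟨n - 1, by omega⟩
  obtain ⟨p, rfl⟩ : ∃ p, m = q + 1 + p := ⟨m - (q + 1), by omega⟩
  refine ⟨((q + 1 + p : ℕ) : ℝ) ^ 2 + 12, by positivity, ?_⟩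
  intro X Y _ _ _ _ _ _ T fdag Φ hΦcont hΦmono hΦ0 hΦnn hΦconc hvsc α δ hα hδ g hg f hf0 hmin ψ hψ
  obtain ⟨ω, hfdag, hω⟩ := hvsc
  set M : ℕ := q + 1 + p with hM
  -- basic objects
  set A : X →L[ℝ] X := ContinuousLinearMap.adjoint T ∘L T with hA
  obtain ⟨R, hSR, hRS⟩ := aux_inverse T α hα
  have hAapp : ∀ x : X, A x = ContinuousLinearMap.adjoint T (T x) := fun x => rfl
  have hAinner : ∀ u : X, ⟪A u, u⟫ = ‖T u‖ ^ 2 := by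
    intro u
    simp [hA, ContinuousLinearMap.adjoint_inner_left, real_inner_self_eq_norm_sq]
  have hAsym : ∀ x y : X, ⟪A x, y⟫ = ⟪x, A y⟫ := by
    intro x y
    rw [hAapp, hAapp, ContinuousLinearMap.adjoint_inner_left,
      ContinuousLinearMap.adjoint_inner_right]
  have hSR' : ∀ x, A (R x) + α • R x = x := by
    intro x; rw [hAapp]; exact hSR x
  have hRS' : ∀ x, R (A x + α • x) = x := by
    intro x; rw [hAapp]; exact hRS x
  have hRsym : ∀ x y : X, ⟪R x, y⟫ = ⟪x, R y⟫ := by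
    intro x y
    conv_lhs => rw [← hSR' y]
    rw [inner_add_right, real_inner_smul_right, ← hAsym, ← real_inner_smul_left,
      ← inner_add_left, hSR' x]
  have hRA : ∀ x : X, A (R x) = R (A x) := by
    intro x
    have hcomm : ∀ u : X, A (A u + α • u) = A (A u) + α • A u := by
      intro u; rw [map_add, map_smul]
    calc A (R x) = R (A (A (R x)) + α • A (R x)) := (hRS' _).symm
      _ = R (A (A (R x) + α • R x)) := by rw [hcomm]
      _ = R (A x) := by rw [hSR' x]
  have hSinner : ∀ x : X, ‖T (R x)‖ ^ 2 + α * ‖R x‖ ^ 2 = ⟪x, R x⟫ := by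
    intro x
    have h0 : (⟪x, R x⟫ : ℝ) = ⟪A (R x) + α • R x, R x⟫ := by rw [hSR' x]
    rw [h0, inner_add_left, real_inner_smul_left, hAinner, real_inner_self_eq_norm_sq]
  have hRnorm : ∀ x : X, α * ‖R x‖ ≤ ‖x‖ := by
    intro x
    have h1 := hSinner x
    have h2 : ⟪x, R x⟫ ≤ ‖x‖ * ‖R x‖ := real_inner_le_norm x (R x)
    have h3 : α * ‖R x‖ ^ 2 ≤ ‖x‖ * ‖R x‖ := by nlinarith [sq_nonneg ‖T (R x)‖]
    rcases eq_or_lt_of_le (norm_nonneg (R x)) with h | h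
    · rw [← h]; simp [norm_nonneg]
    · have := (mul_le_mul_iff_of_pos_right h).mp (by nlinarith : α * ‖R x‖ * ‖R x‖ ≤ ‖x‖ * ‖R x‖)
      exact this
  have hTR : ∀ x : X, α * ‖T (R x)‖ ^ 2 ≤ ‖x‖ ^ 2 := by
    intro x
    have h1 := hSinner x
    have h2 : ⟪x, R x⟫ ≤ ‖x‖ * ‖R x‖ := real_inner_le_norm x (R x)
    have h3 := hRnorm x
    nlinarith [mul_le_mul_of_nonneg_left h2 hα.le, mul_le_mul_of_nonneg_left h3 (norm_nonneg x),
      mul_le_mul_of_nonneg_left h1.le hα.le, mul_le_mul_of_nonneg_left h1.ge hα.le,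
      mul_nonneg (mul_nonneg hα.le hα.le) (sq_nonneg ‖R x‖)]
  have hAR : ∀ x : X, ‖A (R x)‖ ≤ ‖x‖ := by
    intro x
    have h1 : ‖x‖ ^ 2 = ‖A (R x)‖ ^ 2 + 2 * α * ⟪A (R x), R x⟫ + α ^ 2 * ‖R x‖ ^ 2 := by
      conv_lhs => rw [← hSR' x]
      rw [← real_inner_self_eq_norm_sq, inner_add_left, inner_add_right, inner_add_right,
        real_inner_smul_left, real_inner_smul_right, real_inner_smul_left,
        real_inner_smul_right, real_inner_self_eq_norm_sq, real_inner_self_eq_norm_sq,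
        real_inner_comm (R x) (A (R x))]
      ring
    have h2 : 0 ≤ ⟪A (R x), R x⟫ := by rw [hAinner]; positivity
    nlinarith [norm_nonneg (A (R x)), norm_nonneg x, sq_nonneg ‖R x‖]
  -- powers of R and of A*R
  have hRpow_apply : ∀ (j : ℕ) (x : X), (R ^ (j + 1)) x = (R ^ j) (R x) := by
    intro j x
    rw [pow_succ]
    rfl
  have hRpow_apply' : ∀ (j : ℕ) (x : X), (R ^ (j + 1)) x = R ((R ^ j) x) := by
    intro j x
    rw [pow_succ']
    rfl
  have hRpownorm : ∀ (j : ℕ) (x : X), α ^ j * ‖(R ^ j) x‖ ≤ ‖x‖ := by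
    intro j
    induction j with
    | zero => intro x; simp
    | succ j ih =>
      intro x
      rw [hRpow_apply]
      calc α ^ (j + 1) * ‖(R ^ j) (R x)‖ = α * (α ^ j * ‖(R ^ j) (R x)‖) := by ring
        _ ≤ α * ‖R x‖ := mul_le_mul_of_nonneg_left (ih (R x)) hα.le
        _ ≤ ‖x‖ := hRnorm x
  have hPpow : ∀ (k : ℕ) (x : X), ‖((A * R) ^ k) x‖ ≤ ‖x‖ := by
    intro k
    induction k with
    | zero => intro x; simp
    | succ k ih =>
      intro x
      have h1 : ((A * R) ^ (k + 1)) x = ((A * R) ^ k) ((A * R) x) := by rw [pow_succ]; rfl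
      rw [h1]
      calc ‖((A * R) ^ k) ((A * R) x)‖ ≤ ‖(A * R) x‖ := ih _
        _ = ‖A (R x)‖ := rfl
        _ ≤ ‖x‖ := hAR x
  have hcommAR : Commute A R := ContinuousLinearMap.ext fun x => hRA x
  have hRpowsym : ∀ (j : ℕ) (x y : X), ⟪(R ^ j) x, y⟫ = ⟪x, (R ^ j) y⟫ := by
    intro j
    induction j with
    | zero => intro x y; simp
    | succ j ih =>
      intro x y
      rw [hRpow_apply, hRpow_apply', ← hRsym, ih]
  have hApowsym : ∀ (j : ℕ) (x y : X), ⟪(A ^ j) x, y⟫ = ⟪x, (A ^ j) y⟫ := by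
    intro j
    induction j with
    | zero => intro x y; simp
    | succ j ih =>
      intro x y
      have e1 : (A ^ (j + 1)) x = (A ^ j) (A x) := by rw [pow_succ]; rfl
      have e2 : (A ^ (j + 1)) y = A ((A ^ j) y) := by rw [pow_succ']; rfl
      rw [e1, e2, ih, hAsym]
  -- error recursion
  set ξ : Y := g - T fdag with hξdef
  have hξδ : ‖ξ‖ ≤ δ := hg
  have hrec : ∀ k : ℕ, f (k + 1) - fdag
      = R (ContinuousLinearMap.adjoint T ξ) + α • R (f k - fdag) := by
    intro k
    have hmin' : ∀ h : X, ‖T (f (k + 1)) - g‖ ^ 2 + α * ‖f (k + 1) - f k‖ ^ 2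
        ≤ ‖T h - g‖ ^ 2 + α * ‖h - f k‖ ^ 2 := by
      intro h
      have := hmin (k + 1) (by omega) h
      simpa using this
    have hne := aux_normal_eq T α hα g (f k) (f (k + 1)) hmin'
    have h1 : ContinuousLinearMap.adjoint T (T (f (k + 1))) + α • f (k + 1)
        = ContinuousLinearMap.adjoint T g + α • f k := by
      simp only [map_sub, smul_sub] at hne
      exact eq_of_sub_eq_zero (by rw [← hne]; abel)
    have h2 : A (f (k + 1) - fdag) + α • (f (k + 1) - fdag)
        = ContinuousLinearMap.adjoint T ξ + α • (f k - fdag) := by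
      simp only [hξdef, map_sub, smul_sub, hAapp]
      have h1' : (ContinuousLinearMap.adjoint T (T (f (k + 1))) + α • f (k + 1))
          - (ContinuousLinearMap.adjoint T g + α • f k) = 0 := sub_eq_zero.mpr h1
      exact eq_of_sub_eq_zero (by rw [← h1']; abel)
    calc f (k + 1) - fdag
        = R (A (f (k + 1) - fdag) + α • (f (k + 1) - fdag)) := (hRS' _).symm
      _ = R (ContinuousLinearMap.adjoint T ξ + α • (f k - fdag)) := by rw [h2]
      _ = R (ContinuousLinearMap.adjoint T ξ) + α • R (f k - fdag) := by
          rw [map_add, map_smul]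
  -- approximation and noise parts
  set a : ℕ → X := fun k => (-(α ^ k)) • ((R ^ k) fdag) with hadef
  set b : ℕ → X := fun k => (f k - fdag) - a k with hbdef
  have ha : ∀ k, a (k + 1) = α • R (a k) := by
    intro k
    show (-(α ^ (k + 1))) • ((R ^ (k + 1)) fdag) = α • R ((-(α ^ k)) • ((R ^ k) fdag))
    rw [hRpow_apply', map_smul, smul_smul]
    congr 1
    ring
  have hb0 : b 0 = 0 := by
    show (f 0 - fdag) - (-(α ^ 0)) • ((R ^ 0) fdag) = 0
    simp [hf0]
  have hbrec : ∀ k, b (k + 1) = R (ContinuousLinearMap.adjoint T ξ) + α • R (b k) := by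
    intro k
    show (f (k + 1) - fdag) - a (k + 1)
        = R (ContinuousLinearMap.adjoint T ξ) + α • R ((f k - fdag) - a k)
    rw [hrec k, ha k, show R ((f k - fdag) - a k) = R (f k - fdag) - R (a k) from map_sub R _ _,
      smul_sub]
    abel
  have hbnorm : ∀ k : ℕ, ‖b k‖ ≤ (k : ℝ) * ‖R (ContinuousLinearMap.adjoint T ξ)‖ := by
    intro k
    induction k with
    | zero => simp [hb0]
    | succ k ih =>
      rw [hbrec k]
      calc ‖R (ContinuousLinearMap.adjoint T ξ) + α • R (b k)‖
          ≤ ‖R (ContinuousLinearMap.adjoint T ξ)‖ + ‖α • R (b k)‖ := norm_add_le _ _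
        _ = ‖R (ContinuousLinearMap.adjoint T ξ)‖ + α * ‖R (b k)‖ := by
            rw [norm_smul, Real.norm_eq_abs, abs_of_pos hα]
        _ ≤ ‖R (ContinuousLinearMap.adjoint T ξ)‖ + ‖b k‖ := by
            have := hRnorm (b k); linarith
        _ ≤ ‖R (ContinuousLinearMap.adjoint T ξ)‖
            + (k : ℝ) * ‖R (ContinuousLinearMap.adjoint T ξ)‖ := by linarith
        _ = ((k + 1 : ℕ) : ℝ) * ‖R (ContinuousLinearMap.adjoint T ξ)‖ := by
            push_cast; ring
  -- noise bound
  have hnoise : α * ‖R (ContinuousLinearMap.adjoint T ξ)‖ ^ 2 ≤ δ ^ 2 / 4 := by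
    set u : X := R (ContinuousLinearMap.adjoint T ξ) with hu
    have h1 := hSinner (ContinuousLinearMap.adjoint T ξ)
    rw [← hu] at h1
    have h2 : (⟪ContinuousLinearMap.adjoint T ξ, u⟫ : ℝ) = ⟪ξ, T u⟫ := by
      rw [ContinuousLinearMap.adjoint_inner_left]
    have h3 : (⟪ξ, T u⟫ : ℝ) ≤ ‖ξ‖ * ‖T u‖ := real_inner_le_norm _ _
    have h4 : ‖ξ‖ * ‖T u‖ ≤ δ * ‖T u‖ :=
      mul_le_mul_of_nonneg_right hξδ (norm_nonneg _)
    nlinarith [sq_nonneg (δ - 2 * ‖T u‖), sq_nonneg ‖u‖]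
  -- operator identities
  have hop1 : A ^ q * R ^ M = (A * R) ^ q * R ^ (p + 1) := by
    calc A ^ q * R ^ M = A ^ q * (R ^ q * R ^ (p + 1)) := by
          rw [← pow_add, show q + (p + 1) = M from by omega]
      _ = (A ^ q * R ^ q) * R ^ (p + 1) := by rw [mul_assoc]
      _ = (A * R) ^ q * R ^ (p + 1) := by rw [hcommAR.mul_pow]
  have hRP : Commute R (A * R) := (hcommAR.symm).mul_right (Commute.refl R)
  have hop2 : A ^ q * R ^ M = R * ((A * R) ^ q * R ^ p) := by
    calc A ^ q * R ^ M = (A * R) ^ q * R ^ (p + 1) := hop1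
      _ = (A * R) ^ q * (R * R ^ p) := by rw [pow_succ']
      _ = ((A * R) ^ q * R) * R ^ p := by rw [mul_assoc]
      _ = (R * (A * R) ^ q) * R ^ p := by rw [← (hRP.pow_right q).eq]
      _ = R * ((A * R) ^ q * R ^ p) := by rw [mul_assoc]
  have hfdag' : fdag = (A ^ q) ω := by simpa using hfdag
  set v : X := a M with hvdef0
  have hvdef : v = (-(α ^ M)) • ((R ^ M) ((A ^ q) ω)) := by
    show a M = _
    show (-(α ^ M)) • ((R ^ M) fdag) = _
    rw [hfdag']
  set wv : X := (-(α ^ M)) • ((A ^ q) ((R ^ M) v)) with hwv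
  have happly1 : ∀ x : X, (A ^ q) ((R ^ M) x) = ((A * R) ^ q) ((R ^ (p + 1)) x) := by
    intro x
    have h0 : (A ^ q * R ^ M) x = ((A * R) ^ q * R ^ (p + 1)) x := by rw [hop1]
    simpa [ContinuousLinearMap.mul_apply] using h0
  have happly2 : ∀ x : X, (A ^ q) ((R ^ M) x) = R (((A * R) ^ q) ((R ^ p) x)) := by
    intro x
    have h0 : (A ^ q * R ^ M) x = (R * ((A * R) ^ q * R ^ p)) x := by rw [hop2]
    simpa [ContinuousLinearMap.mul_apply] using h0
  have hQ1 : ‖v‖ ^ 2 = ⟪ω, wv⟫ := by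
    rw [← real_inner_self_eq_norm_sq]
    calc (⟪v, v⟫ : ℝ) = ⟪(-(α ^ M)) • ((R ^ M) ((A ^ q) ω)), v⟫ := by rw [← hvdef]
      _ = (-(α ^ M)) * ⟪(R ^ M) ((A ^ q) ω), v⟫ := real_inner_smul_left _ _ _
      _ = (-(α ^ M)) * ⟪(A ^ q) ω, (R ^ M) v⟫ := by rw [hRpowsym]
      _ = (-(α ^ M)) * ⟪ω, (A ^ q) ((R ^ M) v)⟫ := by rw [hApowsym]
      _ = ⟪ω, wv⟫ := by rw [hwv, real_inner_smul_right]
  have hwnorm : ‖wv‖ ≤ α ^ q * ‖v‖ := by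
    have e0 : ‖wv‖ = α ^ M * ‖(A ^ q) ((R ^ M) v)‖ := by
      rw [hwv, norm_smul, Real.norm_eq_abs, abs_neg, abs_pow, abs_of_pos hα]
    rw [e0, happly1]
    calc α ^ M * ‖((A * R) ^ q) ((R ^ (p + 1)) v)‖
        ≤ α ^ M * ‖(R ^ (p + 1)) v‖ := mul_le_mul_of_nonneg_left (hPpow _ _) (by positivity)
      _ = α ^ q * (α ^ (p + 1) * ‖(R ^ (p + 1)) v‖) := by
          rw [show M = q + (p + 1) from by omega, pow_add]; ring
      _ ≤ α ^ q * ‖v‖ := mul_le_mul_of_nonneg_left (hRpownorm _ _) (by positivity)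
  have hTwnorm : ‖T wv‖ ^ 2 ≤ α * α ^ (2 * q) * ‖v‖ ^ 2 := by
    set z : X := ((A * R) ^ q) ((R ^ p) v) with hz
    have e1 : ‖T wv‖ ^ 2 = α ^ (2 * M) * ‖T (R z)‖ ^ 2 := by
      rw [hwv, happly2, ← hz, map_smul, norm_smul, Real.norm_eq_abs, abs_neg, abs_pow,
        abs_of_pos hα, mul_pow, ← pow_mul, show M * 2 = 2 * M from by omega]
    have e2 := hTR z
    have e3 : α ^ p * ‖z‖ ≤ ‖v‖ := by
      calc α ^ p * ‖z‖ ≤ α ^ p * ‖(R ^ p) v‖ :=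
            mul_le_mul_of_nonneg_left (hPpow _ _) (by positivity)
        _ ≤ ‖v‖ := hRpownorm _ _
    have e4 : α ^ (2 * p) * ‖z‖ ^ 2 ≤ ‖v‖ ^ 2 := by
      have h5 := mul_self_le_mul_self (by positivity : (0:ℝ) ≤ α ^ p * ‖z‖) e3
      calc α ^ (2 * p) * ‖z‖ ^ 2 = (α ^ p * ‖z‖) * (α ^ p * ‖z‖) := by
            rw [show 2 * p = p + p from by omega, pow_add]; ring
        _ ≤ ‖v‖ * ‖v‖ := h5
        _ = ‖v‖ ^ 2 := by ring
    calc ‖T wv‖ ^ 2 = (α ^ (2 * q) * α ^ (2 * p) * α) * (α * ‖T (R z)‖ ^ 2) := by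
          rw [e1, show 2 * M = 2 * q + 2 * p + 1 + 1 from by omega, pow_add, pow_add, pow_add,
            pow_one]
          ring
      _ ≤ (α ^ (2 * q) * α ^ (2 * p) * α) * ‖z‖ ^ 2 :=
          mul_le_mul_of_nonneg_left e2 (by positivity)
      _ = (α ^ (2 * q) * α) * (α ^ (2 * p) * ‖z‖ ^ 2) := by ring
      _ ≤ (α ^ (2 * q) * α) * ‖v‖ ^ 2 := mul_le_mul_of_nonneg_left e4 (by positivity)
      _ = α * α ^ (2 * q) * ‖v‖ ^ 2 := by ring
  -- VSC step
  have hψ0 : 0 ≤ ψ := by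
    have h0 := hψ 0 le_rfl
    simpa [hΦ0] using h0
  have hβ : 0 < α ^ (2 * q) := pow_pos hα _
  set t : ℝ := (3 * α ^ (2 * q))⁻¹ with ht
  have ht0 : 0 < t := by positivity
  have hQle : ‖v‖ ^ 2 ≤ 6 * α ^ (2 * q) * ψ := by
    have h := hω (t • wv)
    have hι : (⟪ω, t • wv⟫ : ℝ) = t * ‖v‖ ^ 2 := by
      rw [real_inner_smul_right, hQ1]
    have hwv2 : ‖wv‖ ^ 2 ≤ α ^ (2 * q) * ‖v‖ ^ 2 := by
      have h5 := mul_self_le_mul_self (norm_nonneg wv) hwnorm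
      have h6 : (α ^ q * ‖v‖) * (α ^ q * ‖v‖) = α ^ (2 * q) * ‖v‖ ^ 2 := by
        rw [show 2 * q = q + q from by omega, pow_add]; ring
      nlinarith [h5, h6]
    have hn1 : ‖t • wv‖ ^ 2 ≤ t ^ 2 * (α ^ (2 * q) * ‖v‖ ^ 2) := by
      rw [norm_smul, Real.norm_eq_abs, mul_pow, sq_abs]
      exact mul_le_mul_of_nonneg_left hwv2 (sq_nonneg t)
    have hφ : Φ (‖T (t • wv)‖ ^ 2) ≤ ψ + (‖T (t • wv)‖ ^ 2) / α := by
      have h0 := hψ (‖T (t • wv)‖ ^ 2) (by positivity)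
      rw [neg_div] at h0
      linarith
    have hn2 : ‖T (t • wv)‖ ^ 2 ≤ t ^ 2 * (α * α ^ (2 * q) * ‖v‖ ^ 2) := by
      rw [map_smul, norm_smul, Real.norm_eq_abs, mul_pow, sq_abs]
      exact mul_le_mul_of_nonneg_left hTwnorm (sq_nonneg t)
    have hdiv : (‖T (t • wv)‖ ^ 2) / α ≤ t ^ 2 * α ^ (2 * q) * ‖v‖ ^ 2 := by
      rw [div_le_iff₀ hα]
      nlinarith [hn2]
    have hcomb : t * ‖v‖ ^ 2 ≤ 1 / 2 * (t ^ 2 * (α ^ (2 * q) * ‖v‖ ^ 2)) + ψ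
        + t ^ 2 * α ^ (2 * q) * ‖v‖ ^ 2 := by
      have h5 : (⟪ω, t • wv⟫ : ℝ) ≤ 1 / 2 * ‖t • wv‖ ^ 2 + Φ (‖T (t • wv)‖ ^ 2) := h
      rw [hι] at h5
      linarith [hn1, hφ, hdiv]
    have ht2 : t ^ 2 * α ^ (2 * q) = t / 3 := by
      rw [ht]; field_simp
    have hhalf : t / 2 * ‖v‖ ^ 2 ≤ ψ := by
      have h6 : t ^ 2 * (α ^ (2 * q) * ‖v‖ ^ 2) = t / 3 * ‖v‖ ^ 2 := by
        rw [← mul_assoc, ht2]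
      have h7 : t ^ 2 * α ^ (2 * q) * ‖v‖ ^ 2 = t / 3 * ‖v‖ ^ 2 := by
        rw [ht2]
      rw [h6, h7] at hcomb
      linarith
    have h8 := mul_le_mul_of_nonneg_left hhalf (by positivity : (0:ℝ) ≤ 6 * α ^ (2 * q))
    have h9 : 6 * α ^ (2 * q) * (t / 2 * ‖v‖ ^ 2) = ‖v‖ ^ 2 := by
      rw [ht]; field_simp; ring
    linarith [h8, h9.symm.le, h9.le]
  -- final assembly
  have hEdecomp : f M - fdag = v + b M := by
    show f M - fdag = a M + ((f M - fdag) - a M)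
    abel
  have hEnorm : ‖f M - fdag‖ ≤ ‖v‖ + ‖b M‖ := by
    rw [hEdecomp]; exact norm_add_le _ _
  have hcN2 : ‖R (ContinuousLinearMap.adjoint T ξ)‖ ^ 2 ≤ δ ^ 2 / (4 * α) := by
    rw [le_div_iff₀ (by positivity)]
    nlinarith [hnoise]
  have hbM2 : ‖b M‖ ^ 2 ≤ (M : ℝ) ^ 2 * (δ ^ 2 / (4 * α)) := by
    have h1 : ‖b M‖ * ‖b M‖
        ≤ ((M : ℝ) * ‖R (ContinuousLinearMap.adjoint T ξ)‖)
          * ((M : ℝ) * ‖R (ContinuousLinearMap.adjoint T ξ)‖) :=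
      mul_self_le_mul_self (norm_nonneg _) (hbnorm M)
    nlinarith [hcN2, sq_nonneg (M : ℝ)]
  have hsq : ‖f M - fdag‖ ^ 2 ≤ 2 * ‖v‖ ^ 2 + 2 * ‖b M‖ ^ 2 := by
    have h1 := mul_self_le_mul_self (norm_nonneg (f M - fdag)) hEnorm
    nlinarith [sq_nonneg (‖v‖ - ‖b M‖)]
  have hexp : 2 * (q + 1) - 2 = 2 * q := by omega
  rw [hexp]
  have hd : 0 < δ ^ 2 / α := by positivity
  have hdd : δ ^ 2 / (4 * α) = (δ ^ 2 / α) / 4 := by ring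
  rw [hdd] at hbM2
  nlinarith [hQle, hbM2, hsq, hψ0, hβ, hd, sq_nonneg (M : ℝ),
    mul_nonneg (sq_nonneg (M : ℝ)) hd.le,
    mul_nonneg (mul_nonneg (sq_nonneg (M : ℝ)) hβ.le) hψ0]
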